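/- Let C be a nonempty (n,d,w) constant-weight code with d even and d < 2w ≤ n, with distance distribution {A_{2i}}, and let H = {d/2, …, w}. Suppose H1 ⊆ H satisfies: (a) |H1| ≥ 2; (b) there exist i ≠ j in H1 with m_{i,j} = d; (c) for all k ≠ l in H1 with {k,l} ≠ {i,j}, m_{k,l} < d. Let H2 = H1 \ {i,j}. For each k ∈ H1 let P_k be a positive integer with P_k ≥ T(k,w,k,n−w,d), and let P_{ij}, P_{ji} be positive integers with P_{ji} ≥ T(w1,n1,w2,n2,d) and P_{ij} ≥ T(w1',n1',w2',n2',d), where w1 = |i+j−w|, n1 = i if w < i+j and n1 = w−i otherwise, w2 = |i+j−(n−w)|, n2 = i if n−w < i+j and n2 = (n−w)−i otherwise, and w1', n1', w2', n2' are defined the same way with the roles of i and j interchanged. Then: (1) if P_{ij}/P_i + P_{ji}/P_j ≥ 1, then ((P_j − P_{ji})/(P_j·P_{ij}))·A_{2i} + (1/P_j)·A_{2j} + Σ_{k∈H2} A_{2k}/P_k ≤ 1; (2) if P_{ij}/P_i + P_{ji}/P_j ≥ 1, then (1/P_i)·A_{2i} + ((P_i − P_{ij})/(P_i·P_{ji}))·A_{2j}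 + Σ_{k∈H2} A_{2k}/P_k ≤ 1; (3) if P_{ij}/P_i + P_{ji}/P_j ≤ 1, then Σ_{k∈H1} A_{2k}/P_k ≤ 1. -/

import Mathlib

/-- The number of ones of a binary vector. -/
def wtOnes {n : ℕ} (u : Fin n → ZMod 2) : ℕ :=
  (Finset.univ.filter (fun t => u t = 1)).card

/-- `C` is an `(n,d,w)` constant-weight binary code. -/
def IsCWCode (n d w : ℕ) (C : Finset (Fin n → ZMod 2)) : Prop :=
  (∀ c ∈ C, wtOnes c = w) ∧
  ∀ u ∈ C, ∀ v ∈ C, u ≠ v → d ≤ hammingDist u v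

/-- `A n d w`: the largest possible size of an `(n,d,w)` constant-weight code. -/
noncomputable def A (n d w : ℕ) : ℕ :=
  sSup {M | ∃ C : Finset (Fin n → ZMod 2), IsCWCode n d w C ∧ C.card = M}

/-- `C` is a `(w1,n1,w2,n2,d)` doubly-constant-weight binary code. -/
def IsDCWCode (w1 n1 w2 n2 d : ℕ) (C : Finset (Fin n1 ⊕ Fin n2 → ZMod 2)) : Prop :=
  (∀ c ∈ C,
    (Finset.univ.filter (fun t : Fin n1 => c (Sum.inl t) = 1)).card = w1 ∧
    (Finset.univ.filter (fun t : Fin n2 => c (Sum.inr t) = 1)).card = w2) ∧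
  ∀ u ∈ C, ∀ v ∈ C, u ≠ v → d ≤ hammingDist u v

/-- `T w1 n1 w2 n2 d`: the largest possible size of a `(w1,n1,w2,n2,d)`
doubly-constant-weight code. -/
noncomputable def T (w1 n1 w2 n2 d : ℕ) : ℕ :=
  sSup {M | ∃ C : Finset (Fin n1 ⊕ Fin n2 → ZMod 2), IsDCWCode w1 n1 w2 n2 d C ∧ C.card = M}

/-- `S_i(c)`: the set of codewords of `C` at distance `i` from `c`. -/
def Sdist {n : ℕ} (C : Finset (Fin n → ZMod 2)) (c : Fin n → ZMod 2) (i : ℕ) :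
    Finset (Fin n → ZMod 2) :=
  C.filter (fun u => hammingDist u c = i)

/-- The distance distribution `A_i = (1/|C|) ∑_{c ∈ C} |S_i(c)|` of a code `C`. -/
noncomputable def distDistr {n : ℕ} (C : Finset (Fin n → ZMod 2)) (i : ℕ) : ℚ :=
  (∑ c ∈ C, ((Sdist C c i).card : ℚ)) / (C.card : ℚ)

/-- `V_i`: vectors of `F^n` with exactly `i` ones on the first `w` coordinates and
exactly `i` ones on the last `n - w` coordinates. -/
def Vset (n w i : ℕ) : Finset (Fin n → ZMod 2) :=
  Finset.univ.filter (fun u =>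
    (Finset.univ.filter (fun t : Fin n => t.val < w ∧ u t = 1)).card = i ∧
    (Finset.univ.filter (fun t : Fin n => w ≤ t.val ∧ u t = 1)).card = i)

/-- `m_{i,j} = max { d(u,v) : u ∈ V_i, v ∈ V_j }`. -/
def mMax (n w i j : ℕ) : ℕ :=
  ((Vset n w i) ×ˢ (Vset n w j)).sup fun p => hammingDist p.1 p.2

/-- `P⁻_k(n;x) = ∑_{j odd} C(x,j) C(n-x,k-j)`. -/
def Pminus (k n x : ℕ) : ℕ :=
  ∑ j ∈ Finset.range (k + 1), if Odd j then x.choose j * (n - x).choose (k - j) else 0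

/-- `P⁺_k(n;x) = ∑_{j even} C(x,j) C(n-x,k-j)`. -/
def Pplus (k n x : ℕ) : ℕ :=
  ∑ j ∈ Finset.range (k + 1), if Even j then x.choose j * (n - x).choose (k - j) else 0

/-- The Krawtchouk polynomial `P_k(n;x) = ∑_j (-1)^j C(x,j) C(n-x,k-j)` at integer points. -/
def Kraw (k n x : ℕ) : ℤ :=
  ∑ j ∈ Finset.range (k + 1), (-1 : ℤ) ^ j * x.choose j * (n - x).choose (k - j)


open Finset

lemma zmod2_cases (x : ZMod 2) : x = 0 ∨ x = 1 := by revert x; decide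

lemma card_symmDiff_add {α : Type*} [DecidableEq α] (s t : Finset α) :
    (symmDiff s t).card + 2 * (s ∩ t).card = s.card + t.card := by
  have h : symmDiff s t = (s \ (s ∩ t)) ∪ (t \ (s ∩ t)) := by
    rw [symmDiff_def, Finset.sup_eq_union]
    congr 1 <;> [skip; rw [Finset.inter_comm]] <;> simp [Finset.sdiff_inter_self_left]
  have hd : Disjoint (s \ (s ∩ t)) (t \ (s ∩ t)) := by
    rw [Finset.disjoint_left]
    intro a ha hb
    simp only [Finset.mem_sdiff, Finset.mem_inter] at ha hb
    exact ha.2 ⟨ha.1, hb.1⟩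
  have h1 : (s ∩ t).card ≤ s.card := Finset.card_le_card (Finset.inter_subset_left)
  have h2 : (s ∩ t).card ≤ t.card := Finset.card_le_card (Finset.inter_subset_right)
  rw [h, Finset.card_union_of_disjoint hd, Finset.card_sdiff_of_subset (Finset.inter_subset_left),
    Finset.card_sdiff_of_subset (Finset.inter_subset_right)]
  omega

lemma card_filter_split {n : ℕ} (s : Finset (Fin n)) (p : Fin n → Prop) [DecidablePred p] :
    (Finset.univ.filter p).card = (s.filter p).card + (sᶜ.filter p).card := by
  rw [← Finset.card_union_of_disjoint (Finset.disjoint_filter_filter disjoint_compl_right),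
    ← Finset.filter_union, Finset.union_compl]

lemma ham_def {n : ℕ} (u v : Fin n → ZMod 2) :
    hammingDist u v = (univ.filter fun t => u t ≠ v t).card := rfl

lemma filter_ne_symmDiff {n : ℕ} (s : Finset (Fin n)) (c u v : Fin n → ZMod 2) :
    s.filter (fun t => u t ≠ v t) =
      symmDiff (s.filter fun t => u t ≠ c t) (s.filter fun t => v t ≠ c t) := by
  ext t
  simp only [Finset.mem_symmDiff, Finset.mem_filter]
  have key : ∀ x y z : ZMod 2, x ≠ y ↔ ((x ≠ z ∧ ¬ y ≠ z) ∨ (y ≠ z ∧ ¬ x ≠ z)) := by decide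
  constructor
  · rintro ⟨hts, hne⟩
    rcases (key _ _ (c t)).1 hne with ⟨h1, h2⟩ | ⟨h1, h2⟩
    · exact Or.inl ⟨⟨hts, h1⟩, fun hh => h2 hh.2⟩
    · exact Or.inr ⟨⟨hts, h1⟩, fun hh => h2 hh.2⟩
  · rintro (⟨⟨hts, h1⟩, h2⟩ | ⟨⟨hts, h1⟩, h2⟩)
    · exact ⟨hts, (key _ _ (c t)).2 (Or.inl ⟨h1, fun hh => h2 ⟨hts, hh⟩⟩)⟩
    · exact ⟨hts, (key _ _ (c t)).2 (Or.inr ⟨h1, fun hh => h2 ⟨hts, hh⟩⟩)⟩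

lemma ham_pair {n : ℕ} (s : Finset (Fin n)) (c u v : Fin n → ZMod 2) :
    hammingDist u v =
      (symmDiff (s.filter fun t => u t ≠ c t) (s.filter fun t => v t ≠ c t)).card +
      (symmDiff (sᶜ.filter fun t => u t ≠ c t) (sᶜ.filter fun t => v t ≠ c t)).card := by
  rw [ham_def, card_filter_split s, filter_ne_symmDiff s c u v, filter_ne_symmDiff sᶜ c u v]

lemma card_val_lt {n w : ℕ} (hw : w ≤ n) :
    (univ.filter fun t : Fin n => t.val < w).card = w := by
  have h : (univ.filter fun t : Fin n => t.val < w).card = (Finset.range w).card := by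
    apply Finset.card_bij (fun t _ => t.val)
    · intro t ht
      simp only [Finset.mem_filter] at ht
      simp [ht.2]
    · intro a _ b _ h
      exact Fin.ext h
    · intro m hm
      simp only [Finset.mem_range] at hm
      exact ⟨⟨m, lt_of_lt_of_le hm hw⟩, by simp [hm], rfl⟩
  rw [h, Finset.card_range]

/-- difference counts for a codeword at distance `2k` from `c`. -/
lemma diff_counts {n w k : ℕ} (c u : Fin n → ZMod 2) (hc : wtOnes c = w) (hu : wtOnes u = w)
    (hd : hammingDist u c = 2 * k) :
    (((univ.filter fun t : Fin n => c t = 1)).filter fun t => u t ≠ c t).card = k ∧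
    (((univ.filter fun t : Fin n => c t = 1)ᶜ).filter fun t => u t ≠ c t).card = k := by
  set s := univ.filter fun t : Fin n => c t = 1 with hs
  set x := (s.filter fun t => u t = 1).card with hx
  have h1 : (s.filter fun t => u t ≠ c t).card = w - x := by
    have : s.filter (fun t => u t ≠ c t) = s \ (s.filter fun t => u t = 1) := by
      ext t
      simp only [Finset.mem_filter, Finset.mem_sdiff, hs, Finset.mem_univ, true_and]
      constructor
      · rintro ⟨h1, h2⟩
        refine ⟨h1, fun h3 => h2 ?_⟩
        rw [h3.2, h1]
      · rintro ⟨h1, h2⟩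
        refine ⟨h1, fun h3 => h2 ⟨h1, ?_⟩⟩
        rw [h3, h1]
    have hcs : s.card = w := hc
    rw [this, Finset.card_sdiff_of_subset (Finset.filter_subset _ _), ← hx, hcs]
  have h2 : (sᶜ.filter fun t => u t ≠ c t).card = w - x := by
    have hc0 : ∀ t, t ∈ sᶜ → c t = 0 := by
      intro t ht
      rw [Finset.mem_compl, hs, Finset.mem_filter] at ht
      rcases zmod2_cases (c t) with h | h
      · exact h
      · exact absurd ⟨Finset.mem_univ t, h⟩ ht
    have : sᶜ.filter (fun t => u t ≠ c t) = sᶜ.filter fun t => u t = 1 := by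
      apply Finset.filter_congr
      intro t ht
      rw [hc0 t ht]
      rcases zmod2_cases (u t) with h | h <;> simp [h]
    rw [this]
    have hsplit := card_filter_split s (fun t : Fin n => u t = 1)
    have : (univ.filter fun t : Fin n => u t = 1).card = w := hu
    omega
  have hx_le : x ≤ w := by
    rw [hx]
    calc (s.filter fun t => u t = 1).card ≤ s.card := Finset.card_le_card (Finset.filter_subset _ _)
    _ = w := hc
  have hdd : (s.filter fun t => u t ≠ c t).card + (sᶜ.filter fun t => u t ≠ c t).card = 2 * k := by
    rw [← card_filter_split s, ← ham_def]
    exact hd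
  omega

lemma pair_ham_eq {n w k l : ℕ} (s : Finset (Fin n)) (hs : s.card = w) (hn : w ≤ n)
    (c u v : Fin n → ZMod 2)
    (hu1 : (s.filter fun t => u t ≠ c t).card = k)
    (hu2 : (sᶜ.filter fun t => u t ≠ c t).card = k)
    (hv1 : (s.filter fun t => v t ≠ c t).card = l)
    (hv2 : (sᶜ.filter fun t => v t ≠ c t).card = l) :
    hammingDist u v +
      2 * (((s.filter fun t => u t ≠ c t) ∩ (s.filter fun t => v t ≠ c t)).card +
        ((sᶜ.filter fun t => u t ≠ c t) ∩ (sᶜ.filter fun t => v t ≠ c t)).card) = 2 * k + 2 * l ∧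
    k + l ≤ ((s.filter fun t => u t ≠ c t) ∩ (s.filter fun t => v t ≠ c t)).card + w ∧
    k + l ≤ ((sᶜ.filter fun t => u t ≠ c t) ∩ (sᶜ.filter fun t => v t ≠ c t)).card + (n - w) ∧
    ((s.filter fun t => u t ≠ c t) ∩ (s.filter fun t => v t ≠ c t)).card ≤ k ∧
    ((s.filter fun t => u t ≠ c t) ∩ (s.filter fun t => v t ≠ c t)).card ≤ l ∧
    ((sᶜ.filter fun t => u t ≠ c t) ∩ (sᶜ.filter fun t => v t ≠ c t)).card ≤ k ∧
    ((sᶜ.filter fun t => u t ≠ c t) ∩ (sᶜ.filter fun t => v t ≠ c t)).card ≤ l := by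
  set Du := s.filter fun t => u t ≠ c t with hDu
  set Dv := s.filter fun t => v t ≠ c t with hDv
  set Eu := sᶜ.filter fun t => u t ≠ c t with hEu
  set Ev := sᶜ.filter fun t => v t ≠ c t with hEv
  have hsc : sᶜ.card = n - w := by rw [Finset.card_compl, Fintype.card_fin, hs]
  have hin := card_symmDiff_add Du Dv
  have hout := card_symmDiff_add Eu Ev
  have hham := ham_pair s c u v
  rw [← hDu, ← hDv, ← hEu, ← hEv] at hham
  have hin2 := Finset.card_union_add_card_inter Du Dv
  have hout2 := Finset.card_union_add_card_inter Eu Ev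
  have hinu : (Du ∪ Dv).card ≤ w := by
    rw [← hs]
    exact Finset.card_le_card (Finset.union_subset (Finset.filter_subset _ _) (Finset.filter_subset _ _))
  have houtu : (Eu ∪ Ev).card ≤ n - w := by
    rw [← hsc]
    exact Finset.card_le_card (Finset.union_subset (Finset.filter_subset _ _) (Finset.filter_subset _ _))
  have h1 : (Du ∩ Dv).card ≤ k := hu1 ▸ Finset.card_le_card (Finset.inter_subset_left)
  have h2 : (Du ∩ Dv).card ≤ l := hv1 ▸ Finset.card_le_card (Finset.inter_subset_right)
  have h3 : (Eu ∩ Ev).card ≤ k := hu2 ▸ Finset.card_le_card (Finset.inter_subset_left)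
  have h4 : (Eu ∩ Ev).card ≤ l := hv2 ▸ Finset.card_le_card (Finset.inter_subset_right)
  omega

lemma mem_Vset_iff {n w i : ℕ} (u : Fin n → ZMod 2) :
    u ∈ Vset n w i ↔
      (((univ.filter fun t : Fin n => t.val < w)).filter
        fun t => u t ≠ (fun _ : Fin n => (0 : ZMod 2)) t).card = i ∧
      (((univ.filter fun t : Fin n => t.val < w)ᶜ).filter
        fun t => u t ≠ (fun _ : Fin n => (0 : ZMod 2)) t).card = i := by
  have hne : ∀ x : ZMod 2, (x ≠ 0) ↔ x = 1 := by decide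
  have key1 : (univ.filter fun t : Fin n => t.val < w ∧ u t = 1) =
      ((univ.filter fun t : Fin n => t.val < w).filter fun t => u t ≠ 0) := by
    rw [Finset.filter_filter]
    ext t
    simp only [Finset.mem_filter, Finset.mem_univ, true_and, hne]
  have key2 : (univ.filter fun t : Fin n => w ≤ t.val ∧ u t = 1) =
      ((univ.filter fun t : Fin n => t.val < w)ᶜ.filter fun t => u t ≠ 0) := by
    rw [Finset.compl_filter, Finset.filter_filter]
    ext t
    simp only [Finset.mem_filter, Finset.mem_univ, true_and, hne, not_lt]
  rw [Vset, Finset.mem_filter]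
  simp only [Finset.mem_univ, true_and]
  rw [key1, key2]

lemma mMax_eq {n w i j : ℕ} (hn : 2 * w ≤ n) (hi : i ≤ w) (hj : j ≤ w) :
    mMax n w i j + 2 * (i + j - w) + 2 * (i + j - (n - w)) = 2 * i + 2 * j := by
  classical
  have hwn : w ≤ n := by omega
  set s := univ.filter fun t : Fin n => t.val < w with hsdef
  have hs : s.card = w := card_val_lt hwn
  have hsc : sᶜ.card = n - w := by rw [Finset.card_compl, Fintype.card_fin, hs]
  set z : Fin n → ZMod 2 := fun _ => 0 with hz
  -- upper bound
  have hub : ∀ u ∈ Vset n w i, ∀ v ∈ Vset n w j,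
      hammingDist u v + 2 * (i + j - w) + 2 * (i + j - (n - w)) ≤ 2 * i + 2 * j := by
    intro u hu v hv
    rw [mem_Vset_iff] at hu hv
    have := pair_ham_eq s hs hwn z u v hu.1 hu.2 hv.1 hv.2
    omega
  -- construction
  have hiw2 : i ≤ n - w := by omega
  have hjw2 : j ≤ n - w := by omega
  obtain ⟨A1, hA1s, hA1⟩ := Finset.exists_subset_card_eq (hs ▸ hi)
  obtain ⟨D1, hD1, hD1c⟩ := Finset.exists_subset_card_eq (show i + j - w ≤ A1.card by omega)
  obtain ⟨E1, hE1, hE1c⟩ := Finset.exists_subset_card_eq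
    (show j - (i + j - w) ≤ (s \ A1).card by rw [Finset.card_sdiff_of_subset hA1s]; omega)
  obtain ⟨A2, hA2s, hA2⟩ := Finset.exists_subset_card_eq (hsc ▸ hiw2)
  obtain ⟨D2, hD2, hD2c⟩ := Finset.exists_subset_card_eq (show i + j - (n - w) ≤ A2.card by omega)
  obtain ⟨E2, hE2, hE2c⟩ := Finset.exists_subset_card_eq
    (show j - (i + j - (n - w)) ≤ (sᶜ \ A2).card by rw [Finset.card_sdiff_of_subset hA2s]; omega)
  set B1 := D1 ∪ E1 with hB1
  set B2 := D2 ∪ E2 with hB2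
  have hdis1 : Disjoint D1 E1 :=
    Finset.disjoint_left.2 fun a ha hb => (Finset.mem_sdiff.1 (hE1 hb)).2 (hD1 ha)
  have hdis2 : Disjoint D2 E2 :=
    Finset.disjoint_left.2 fun a ha hb => (Finset.mem_sdiff.1 (hE2 hb)).2 (hD2 ha)
  have hB1c : B1.card = j := by rw [hB1, Finset.card_union_of_disjoint hdis1]; omega
  have hB2c : B2.card = j := by rw [hB2, Finset.card_union_of_disjoint hdis2]; omega
  have hB1s : B1 ⊆ s := Finset.union_subset (hD1.trans hA1s)
    (fun a ha => (Finset.mem_sdiff.1 (hE1 ha)).1)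
  have hB2s : B2 ⊆ sᶜ := Finset.union_subset (hD2.trans hA2s)
    (fun a ha => (Finset.mem_sdiff.1 (hE2 ha)).1)
  have hAB1 : A1 ∩ B1 = D1 := by
    rw [hB1, Finset.inter_union_distrib_left]
    have h1 : A1 ∩ D1 = D1 := Finset.inter_eq_right.2 hD1
    have h2 : A1 ∩ E1 = ∅ := by
      rw [Finset.eq_empty_iff_forall_notMem]
      intro a ha
      obtain ⟨ha1, ha2⟩ := Finset.mem_inter.1 ha
      exact (Finset.mem_sdiff.1 (hE1 ha2)).2 ha1
    rw [h1, h2, Finset.union_empty]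
  have hAB2 : A2 ∩ B2 = D2 := by
    rw [hB2, Finset.inter_union_distrib_left]
    have h1 : A2 ∩ D2 = D2 := Finset.inter_eq_right.2 hD2
    have h2 : A2 ∩ E2 = ∅ := by
      rw [Finset.eq_empty_iff_forall_notMem]
      intro a ha
      obtain ⟨ha1, ha2⟩ := Finset.mem_inter.1 ha
      exact (Finset.mem_sdiff.1 (hE2 ha2)).2 ha1
    rw [h1, h2, Finset.union_empty]
  set u0 : Fin n → ZMod 2 := fun t => if t ∈ A1 ∪ A2 then 1 else 0 with hu0
  set v0 : Fin n → ZMod 2 := fun t => if t ∈ B1 ∪ B2 then 1 else 0 with hv0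
  have hu0v : ∀ t, u0 t ≠ z t ↔ t ∈ A1 ∪ A2 := by
    intro t
    by_cases h : t ∈ A1 ∪ A2
    · simp only [hu0, hz, if_pos h]
      exact iff_of_true one_ne_zero h
    · simp only [hu0, hz, if_neg h]
      exact iff_of_false (by simp) h
  have hv0v : ∀ t, v0 t ≠ z t ↔ t ∈ B1 ∪ B2 := by
    intro t
    by_cases h : t ∈ B1 ∪ B2
    · simp only [hv0, hz, if_pos h]
      exact iff_of_true one_ne_zero h
    · simp only [hv0, hz, if_neg h]
      exact iff_of_false (by simp) h
  -- filters of u0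
  have hfil : ∀ (P Q : Finset (Fin n)) (x : Fin n → ZMod 2), P ⊆ s → Q ⊆ sᶜ →
      (∀ t, x t ≠ z t ↔ t ∈ P ∪ Q) →
      (s.filter fun t => x t ≠ z t) = P ∧ (sᶜ.filter fun t => x t ≠ z t) = Q := by
    intro P Q x hP hQ hx
    constructor
    · ext t
      rw [Finset.mem_filter, hx t, Finset.mem_union]
      constructor
      · rintro ⟨hts, hPQ | hPQ⟩
        · exact hPQ
        · exact absurd hts (Finset.mem_compl.1 (hQ hPQ))
      · intro htP
        exact ⟨hP htP, Or.inl htP⟩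
    · ext t
      rw [Finset.mem_filter, hx t, Finset.mem_union]
      constructor
      · rintro ⟨hts, hPQ | hPQ⟩
        · exact absurd (hP hPQ) (Finset.mem_compl.1 hts)
        · exact hPQ
      · intro htQ
        exact ⟨hQ htQ, Or.inr htQ⟩
  obtain ⟨hu1, hu2⟩ := hfil A1 A2 u0 hA1s hA2s hu0v
  obtain ⟨hv1, hv2⟩ := hfil B1 B2 v0 hB1s hB2s hv0v
  have hu0m : u0 ∈ Vset n w i := by
    rw [mem_Vset_iff]
    constructor
    · show (s.filter fun t => u0 t ≠ z t).card = i
      rw [hu1, hA1]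
    · show (sᶜ.filter fun t => u0 t ≠ z t).card = i
      rw [hu2, hA2]
  have hv0m : v0 ∈ Vset n w j := by
    rw [mem_Vset_iff]
    constructor
    · show (s.filter fun t => v0 t ≠ z t).card = j
      rw [hv1, hB1c]
    · show (sᶜ.filter fun t => v0 t ≠ z t).card = j
      rw [hv2, hB2c]
  have hpair := pair_ham_eq s hs hwn z u0 v0 (by rw [hu1, hA1]) (by rw [hu2, hA2])
    (by rw [hv1, hB1c]) (by rw [hv2, hB2c])
  have hin : ((s.filter fun t => u0 t ≠ z t) ∩ (s.filter fun t => v0 t ≠ z t)).card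
      = i + j - w := by rw [hu1, hv1, hAB1, hD1c]
  have hout : ((sᶜ.filter fun t => u0 t ≠ z t) ∩ (sᶜ.filter fun t => v0 t ≠ z t)).card
      = i + j - (n - w) := by rw [hu2, hv2, hAB2, hD2c]
  have heq := hpair.1
  rw [hin, hout] at heq
  have hle : hammingDist u0 v0 ≤ mMax n w i j := by
    show hammingDist u0 v0 ≤ (Vset n w i ×ˢ Vset n w j).sup fun p => hammingDist p.1 p.2
    exact Finset.le_sup (f := fun p : (Fin n → ZMod 2) × (Fin n → ZMod 2) => hammingDist p.1 p.2)
      (b := (u0, v0)) (Finset.mem_product.2 ⟨hu0m, hv0m⟩)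
  have hle2 : mMax n w i j ≤ 2 * i + 2 * j - 2 * (i + j - w) - 2 * (i + j - (n - w)) := by
    show (Vset n w i ×ˢ Vset n w j).sup (fun p => hammingDist p.1 p.2) ≤ _
    apply Finset.sup_le
    intro p hp
    obtain ⟨hp1, hp2⟩ := Finset.mem_product.1 hp
    have := hub p.1 hp1 p.2 hp2
    omega
  omega


lemma card_filter_equiv {n m : ℕ} (A : Finset (Fin n)) (e : {x // x ∈ A} ≃ Fin m)
    (p : Fin n → Prop) [DecidablePred p] :
    (Finset.univ.filter fun s : Fin m => p ↑(e.symm s)).card = (A.filter p).card := by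
  apply Finset.card_bij (fun s _ => (↑(e.symm s) : Fin n))
  · intro s hs
    simp only [Finset.mem_filter, Finset.mem_univ, true_and] at hs
    exact Finset.mem_filter.2 ⟨(e.symm s).2, hs⟩
  · intro s1 _ s2 _ h
    exact e.symm.injective (Subtype.ext h)
  · intro t ht
    simp only [Finset.mem_filter] at ht
    exact ⟨e ⟨t, ht.1⟩, by simp [ht.2], by simp⟩

lemma card_filter_sum {α β : Type*} [Fintype α] [Fintype β] (p : α ⊕ β → Prop)
    [DecidablePred p] :
    (Finset.univ.filter p).card =
      (Finset.univ.filter fun a : α => p (Sum.inl a)).card +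
      (Finset.univ.filter fun b : β => p (Sum.inr b)).card := by
  simp only [Finset.card_filter]
  exact Fintype.sum_sum_type _

lemma Tset_bddAbove (w1 n1 w2 n2 d : ℕ) :
    BddAbove {M | ∃ C : Finset (Fin n1 ⊕ Fin n2 → ZMod 2),
      IsDCWCode w1 n1 w2 n2 d C ∧ C.card = M} := by
  refine ⟨Fintype.card (Fin n1 ⊕ Fin n2 → ZMod 2), ?_⟩
  rintro M ⟨C, _, rfl⟩
  exact Finset.card_le_univ C

lemma card_le_T {n : ℕ} (S : Finset (Fin n → ZMod 2)) (A B : Finset (Fin n))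
    (hAB : Disjoint A B) {n1 n2 w1 w2 d : ℕ} (hA : A.card = n1) (hB : B.card = n2)
    (g : Fin n → ZMod 2)
    (hw : ∀ x ∈ S, (A.filter (fun t => x t + g t = 1)).card = w1 ∧
      (B.filter (fun t => x t + g t = 1)).card = w2)
    (hdiff : ∀ x ∈ S, ∀ y ∈ S, x ≠ y →
      (∀ t, x t ≠ y t → t ∈ A ∪ B) ∧ d ≤ hammingDist x y) :
    S.card ≤ T w1 n1 w2 n2 d := by
  classical
  let eA : {x // x ∈ A} ≃ Fin n1 := A.equivFin.trans (finCongr hA)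
  let eB : {x // x ∈ B} ≃ Fin n2 := B.equivFin.trans (finCongr hB)
  set Φ : (Fin n → ZMod 2) → (Fin n1 ⊕ Fin n2 → ZMod 2) :=
    fun x => Sum.elim (fun s => x ↑(eA.symm s) + g ↑(eA.symm s))
      (fun s => x ↑(eB.symm s) + g ↑(eB.symm s)) with hΦ
  -- distance preservation
  have hdist : ∀ x ∈ S, ∀ y ∈ S, x ≠ y → hammingDist (Φ x) (Φ y) = hammingDist x y := by
    intro x hx y hy hxy
    have h1 : hammingDist (Φ x) (Φ y) =
        (A.filter fun t => x t ≠ y t).card + (B.filter fun t => x t ≠ y t).card := by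
      show (Finset.univ.filter fun s => Φ x s ≠ Φ y s).card = _
      rw [card_filter_sum]
      congr 1
      · have heq : (Finset.univ.filter fun a : Fin n1 => Φ x (Sum.inl a) ≠ Φ y (Sum.inl a)) =
            (Finset.univ.filter fun a : Fin n1 => (fun t : Fin n => x t ≠ y t) ↑(eA.symm a)) := by
          apply Finset.filter_congr
          intro a _
          simp only [hΦ, Sum.elim_inl, eq_iff_iff]
          constructor
          · intro h h2; exact h (by rw [h2])
          · intro h h2; exact h (add_right_cancel h2)
        rw [heq]
        exact card_filter_equiv A eA (fun t : Fin n => x t ≠ y t)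
      · have heq : (Finset.univ.filter fun a : Fin n2 => Φ x (Sum.inr a) ≠ Φ y (Sum.inr a)) =
            (Finset.univ.filter fun a : Fin n2 => (fun t : Fin n => x t ≠ y t) ↑(eB.symm a)) := by
          apply Finset.filter_congr
          intro a _
          simp only [hΦ, Sum.elim_inr, eq_iff_iff]
          constructor
          · intro h h2; exact h (by rw [h2])
          · intro h h2; exact h (add_right_cancel h2)
        rw [heq]
        exact card_filter_equiv B eB (fun t : Fin n => x t ≠ y t)
    have h2 : (Finset.univ.filter fun t : Fin n => x t ≠ y t) =
        ((A ∪ B).filter fun t => x t ≠ y t) := by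
      apply Finset.ext
      intro t
      simp only [Finset.mem_filter, Finset.mem_univ, true_and]
      exact ⟨fun h => ⟨(hdiff x hx y hy hxy).1 t h, h⟩, fun h => h.2⟩
    show _ = (Finset.univ.filter fun t : Fin n => x t ≠ y t).card
    rw [h1, h2, Finset.filter_union, Finset.card_union_of_disjoint
      (Finset.disjoint_filter_filter hAB)]
  -- injectivity
  have hinj : Set.InjOn Φ S := by
    intro x hx y hy h
    by_contra hxy
    obtain ⟨t, ht⟩ := Function.ne_iff.1 hxy
    have htAB := (hdiff x hx y hy hxy).1 t ht
    rcases Finset.mem_union.1 htAB with hmem | hmem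
    · have := congrFun h (Sum.inl (eA ⟨t, hmem⟩))
      simp only [hΦ, Sum.elim_inl, Equiv.symm_apply_apply] at this
      exact ht (add_right_cancel this)
    · have := congrFun h (Sum.inr (eB ⟨t, hmem⟩))
      simp only [hΦ, Sum.elim_inr, Equiv.symm_apply_apply] at this
      exact ht (add_right_cancel this)
  have hcard : (S.image Φ).card = S.card :=
    Finset.card_image_of_injOn (by exact_mod_cast hinj)
  have hmem : (S.image Φ).card ∈ {M | ∃ C : Finset (Fin n1 ⊕ Fin n2 → ZMod 2),
      IsDCWCode w1 n1 w2 n2 d C ∧ C.card = M} := by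
    refine ⟨S.image Φ, ⟨?_, ?_⟩, rfl⟩
    · intro c hc
      obtain ⟨x, hx, rfl⟩ := Finset.mem_image.1 hc
      constructor
      · exact (card_filter_equiv A eA (fun s : Fin n => x s + g s = 1)).trans (hw x hx).1
      · exact (card_filter_equiv B eB (fun s : Fin n => x s + g s = 1)).trans (hw x hx).2
    · intro u hu v hv huv
      obtain ⟨x, hx, rfl⟩ := Finset.mem_image.1 hu
      obtain ⟨y, hy, rfl⟩ := Finset.mem_image.1 hv
      have hxy : x ≠ y := fun h => huv (by rw [h])
      rw [hdist x hx y hy hxy]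
      exact (hdiff x hx y hy hxy).2
  rw [← hcard]
  exact le_csSup (Tset_bddAbove w1 n1 w2 n2 d) hmem


lemma zmod2_add_eq_one (a b : ZMod 2) : a + b = 1 ↔ a ≠ b := by revert a b; decide
lemma zmod2_add_succ_eq_one (a b : ZMod 2) : a + (b + 1) = 1 ↔ a = b := by revert a b; decide
lemma zmod2_ne_iff_eq_add (a b : ZMod 2) : a ≠ b ↔ a = b + 1 := by revert a b; decide

lemma part_weight {n : ℕ} (σ : Finset (Fin n)) (W a b : ℕ) (hσ : σ.card = W)
    (c x v : Fin n → ZMod 2)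
    (hx : (σ.filter fun t => x t ≠ c t).card = a)
    (hv : (σ.filter fun t => v t ≠ c t).card = b)
    (hint : ((σ.filter fun t => x t ≠ c t) ∩ (σ.filter fun t => v t ≠ c t)).card = a + b - W) :
    (((if W < b + a then σ.filter fun t => v t ≠ c t
        else σ \ (σ.filter fun t => v t ≠ c t))).filter
      (fun t => x t + (if W < b + a then c t else c t + 1) = 1)).card
      = ((b : ℤ) + a - W).natAbs := by
  set Dx := σ.filter fun t => x t ≠ c t with hDx
  set Dv := σ.filter fun t => v t ≠ c t with hDv
  have haW : a ≤ W := by rw [← hx, ← hσ]; exact Finset.card_le_card (Finset.filter_subset _ _)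
  have hbW : b ≤ W := by rw [← hv, ← hσ]; exact Finset.card_le_card (Finset.filter_subset _ _)
  by_cases hc : W < b + a
  · simp only [if_pos hc]
    have hset : Dv.filter (fun t => x t + c t = 1) = Dv ∩ Dx := by
      ext t
      simp only [Finset.mem_filter, Finset.mem_inter, hDv, hDx, zmod2_add_eq_one]
      tauto
    rw [hset, Finset.inter_comm, hint]
    omega
  · simp only [if_neg hc]
    have hset : (σ \ Dv).filter (fun t => x t + (c t + 1) = 1) = σ \ (Dx ∪ Dv) := by
      ext t
      simp only [Finset.mem_filter, Finset.mem_sdiff, Finset.mem_union, hDv, hDx,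
        zmod2_add_succ_eq_one, not_or]
      constructor
      · rintro ⟨⟨h1, h2⟩, h3⟩
        exact ⟨h1, ⟨fun hh => hh.2 h3, h2⟩⟩
      · rintro ⟨h1, h2, h3⟩
        refine ⟨⟨h1, h3⟩, ?_⟩
        by_contra hne
        exact h2 ⟨h1, hne⟩
    have hsub : Dx ∪ Dv ⊆ σ :=
      Finset.union_subset (Finset.filter_subset _ _) (Finset.filter_subset _ _)
    have hui := Finset.card_union_add_card_inter Dx Dv
    rw [hset, Finset.card_sdiff_of_subset hsub, hσ]
    omega

lemma part_fixed {n : ℕ} (σ : Finset (Fin n)) (W a b : ℕ) (hσ : σ.card = W)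
    (c x v : Fin n → ZMod 2)
    (hx : (σ.filter fun t => x t ≠ c t).card = a)
    (hv : (σ.filter fun t => v t ≠ c t).card = b)
    (hint : ((σ.filter fun t => x t ≠ c t) ∩ (σ.filter fun t => v t ≠ c t)).card = a + b - W)
    (t : Fin n) (ht : t ∈ σ)
    (htA : t ∉ (if W < b + a then σ.filter fun t => v t ≠ c t
      else σ \ (σ.filter fun t => v t ≠ c t))) :
    x t = (if W < b + a then c t + 1 else c t) := by
  set Dx := σ.filter fun t => x t ≠ c t with hDx
  set Dv := σ.filter fun t => v t ≠ c t with hDv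
  have haW : a ≤ W := by rw [← hx, ← hσ]; exact Finset.card_le_card (Finset.filter_subset _ _)
  have hbW : b ≤ W := by rw [← hv, ← hσ]; exact Finset.card_le_card (Finset.filter_subset _ _)
  by_cases hc : W < b + a
  · rw [if_pos hc] at htA ⊢
    have htmem : t ∈ σ \ Dv := Finset.mem_sdiff.2 ⟨ht, htA⟩
    have hsub : Dx \ Dv ⊆ σ \ Dv :=
      fun a ha => Finset.mem_sdiff.2 ⟨Finset.filter_subset _ _ (Finset.mem_sdiff.1 ha).1,
        (Finset.mem_sdiff.1 ha).2⟩
    have hc1 := Finset.card_sdiff_add_card_inter Dx Dv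
    have hc2 : (σ \ Dv).card = W - b := by rw [Finset.card_sdiff_of_subset (Finset.filter_subset _ _), hσ, hv]
    have heq : Dx \ Dv = σ \ Dv := by
      apply Finset.eq_of_subset_of_card_le hsub
      omega
    rw [← heq] at htmem
    have : t ∈ Dx := Finset.mem_sdiff.1 htmem |>.1
    rw [hDx, Finset.mem_filter] at this
    exact (zmod2_ne_iff_eq_add _ _).1 this.2
  · rw [if_neg hc] at htA ⊢
    have htv : t ∈ Dv := by
      by_contra hh
      exact htA (Finset.mem_sdiff.2 ⟨ht, hh⟩)
    have hzero : (Dx ∩ Dv).card = 0 := by omega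
    have : t ∉ Dx := by
      intro hh
      rw [Finset.card_eq_zero] at hzero
      have : t ∈ Dx ∩ Dv := Finset.mem_inter.2 ⟨hh, htv⟩
      simp [hzero] at this
    rw [hDx, Finset.mem_filter, not_and] at this
    have := this ht
    rw [not_not] at this
    exact this


lemma inter_counts {n d w i j : ℕ} (hn : 2 * w ≤ n) (hi : i ≤ w) (hj : j ≤ w)
    (hm : mMax n w i j = d)
    (s : Finset (Fin n)) (hs : s.card = w)
    (c x v : Fin n → ZMod 2)
    (hx1 : (s.filter fun t => x t ≠ c t).card = i)
    (hx2 : (sᶜ.filter fun t => x t ≠ c t).card = i)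
    (hv1 : (s.filter fun t => v t ≠ c t).card = j)
    (hv2 : (sᶜ.filter fun t => v t ≠ c t).card = j)
    (hd : d ≤ hammingDist x v) :
    ((s.filter fun t => x t ≠ c t) ∩ (s.filter fun t => v t ≠ c t)).card = i + j - w ∧
    ((sᶜ.filter fun t => x t ≠ c t) ∩ (sᶜ.filter fun t => v t ≠ c t)).card
      = i + j - (n - w) := by
  have hp := pair_ham_eq s hs (by omega) c x v hx1 hx2 hv1 hv2
  have hM := mMax_eq hn hi hj
  constructor <;> omega

lemma base_bound {n d w k : ℕ} (C : Finset (Fin n → ZMod 2)) (hcode : IsCWCode n d w C)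
    (hwn : w ≤ n) (c : Fin n → ZMod 2) (hc : c ∈ C) :
    (Sdist C c (2 * k)).card ≤ T k w k (n - w) d := by
  classical
  have hs : (univ.filter fun t : Fin n => c t = 1).card = w := hcode.1 c hc
  have hsc : (univ.filter fun t : Fin n => c t = 1)ᶜ.card = n - w := by
    rw [Finset.card_compl, Fintype.card_fin, hs]
  apply card_le_T _ _ _ disjoint_compl_right hs hsc c
  · intro x hx
    rw [Sdist, Finset.mem_filter] at hx
    have hd := diff_counts c x (hcode.1 c hc) (hcode.1 x hx.1) hx.2
    constructor
    · rw [show ((univ.filter fun t : Fin n => c t = 1).filter fun t => x t + c t = 1)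
          = (univ.filter fun t : Fin n => c t = 1).filter fun t => x t ≠ c t from
        Finset.filter_congr fun t _ => by rw [zmod2_add_eq_one]]
      exact hd.1
    · rw [show ((univ.filter fun t : Fin n => c t = 1)ᶜ.filter fun t => x t + c t = 1)
          = (univ.filter fun t : Fin n => c t = 1)ᶜ.filter fun t => x t ≠ c t from
        Finset.filter_congr fun t _ => by rw [zmod2_add_eq_one]]
      exact hd.2
  · intro x hx y hy hxy
    refine ⟨fun t _ => ?_, hcode.2 x (Finset.filter_subset _ _ hx) y
      (Finset.filter_subset _ _ hy) hxy⟩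
    rw [Finset.mem_union]
    by_cases h : t ∈ univ.filter fun t : Fin n => c t = 1
    · exact Or.inl h
    · exact Or.inr (Finset.mem_compl.2 h)

lemma no_two {n d w k l : ℕ} (C : Finset (Fin n → ZMod 2)) (hcode : IsCWCode n d w C)
    (hn : 2 * w ≤ n) (hk : k ≤ w) (hl : l ≤ w) (hkl : k ≠ l) (hmax : mMax n w k l < d)
    (c : Fin n → ZMod 2) (hc : c ∈ C) (u v : Fin n → ZMod 2)
    (hu : u ∈ Sdist C c (2 * k)) (hv : v ∈ Sdist C c (2 * l)) : False := by
  classical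
  have hs : (univ.filter fun t : Fin n => c t = 1).card = w := hcode.1 c hc
  rw [Sdist, Finset.mem_filter] at hu hv
  have hdu := diff_counts c u (hcode.1 c hc) (hcode.1 u hu.1) hu.2
  have hdv := diff_counts c v (hcode.1 c hc) (hcode.1 v hv.1) hv.2
  have huv : u ≠ v := by
    rintro rfl
    have h1 := hu.2
    have h2 := hv.2
    omega
  have hd := hcode.2 u hu.1 v hv.1 huv
  have hp := pair_ham_eq _ hs (show w ≤ n by omega) c u v hdu.1 hdu.2 hdv.1 hdv.2
  have hM := mMax_eq hn hk hl
  omega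

lemma cross_bound {n d w i j : ℕ} (C : Finset (Fin n → ZMod 2)) (hcode : IsCWCode n d w C)
    (hn : 2 * w ≤ n) (hi : i ≤ w) (hj : j ≤ w) (hij : i ≠ j) (hm : mMax n w i j = d)
    (c : Fin n → ZMod 2) (hc : c ∈ C) (v : Fin n → ZMod 2) (hv : v ∈ Sdist C c (2 * j)) :
    (Sdist C c (2 * i)).card ≤ T (((j : ℤ) + i - (w : ℤ)).natAbs)
      (if w < j + i then j else w - j)
      (((j : ℤ) + i - ((n - w : ℕ) : ℤ)).natAbs)
      (if n - w < j + i then j else (n - w) - j) d := by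
  classical
  have hs : (univ.filter fun t : Fin n => c t = 1).card = w := hcode.1 c hc
  set s := univ.filter fun t : Fin n => c t = 1 with hsdef
  have hsc : sᶜ.card = n - w := by rw [Finset.card_compl, Fintype.card_fin, hs]
  rw [Sdist, Finset.mem_filter] at hv
  have hdv := diff_counts c v (hcode.1 c hc) (hcode.1 v hv.1) hv.2
  rw [← hsdef] at hdv
  have hxfacts : ∀ x ∈ Sdist C c (2 * i),
      ((s.filter fun t => x t ≠ c t).card = i ∧ (sᶜ.filter fun t => x t ≠ c t).card = i) ∧
      ((s.filter fun t => x t ≠ c t) ∩ (s.filter fun t => v t ≠ c t)).card = i + j - w ∧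
      ((sᶜ.filter fun t => x t ≠ c t) ∩ (sᶜ.filter fun t => v t ≠ c t)).card
        = i + j - (n - w) := by
    intro x hx
    rw [Sdist, Finset.mem_filter] at hx
    have hdx := diff_counts c x (hcode.1 c hc) (hcode.1 x hx.1) hx.2
    rw [← hsdef] at hdx
    have hxv : x ≠ v := by
      rintro rfl
      have h1 := hx.2
      have h2 := hv.2
      omega
    have hd := hcode.2 x hx.1 v hv.1 hxv
    exact ⟨hdx, inter_counts hn hi hj hm s hs c x v hdx.1 hdx.2 hdv.1 hdv.2 hd⟩
  set A := (if w < j + i then s.filter fun t => v t ≠ c t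
    else s \ (s.filter fun t => v t ≠ c t)) with hA
  set B := (if n - w < j + i then sᶜ.filter fun t => v t ≠ c t
    else sᶜ \ (sᶜ.filter fun t => v t ≠ c t)) with hB
  have hAs : A ⊆ s := by
    rw [hA]; split_ifs
    · exact Finset.filter_subset _ _
    · exact Finset.sdiff_subset
  have hBs : B ⊆ sᶜ := by
    rw [hB]; split_ifs
    · exact Finset.filter_subset _ _
    · exact Finset.sdiff_subset
  have hdisj : Disjoint A B := disjoint_compl_right.mono hAs hBs
  have hAcard : A.card = (if w < j + i then j else w - j) := by
    rw [hA]; split_ifs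
    · exact hdv.1
    · rw [Finset.card_sdiff_of_subset (Finset.filter_subset _ _), hs, hdv.1]
  have hBcard : B.card = (if n - w < j + i then j else (n - w) - j) := by
    rw [hB]; split_ifs
    · exact hdv.2
    · rw [Finset.card_sdiff_of_subset (Finset.filter_subset _ _), hsc, hdv.2]
  set g : Fin n → ZMod 2 := fun t => if t ∈ s then (if w < j + i then c t else c t + 1)
    else (if n - w < j + i then c t else c t + 1) with hg
  apply card_le_T _ A B hdisj hAcard hBcard g
  · intro x hx
    obtain ⟨⟨hx1, hx2⟩, hint1, hint2⟩ := hxfacts x hx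
    constructor
    · have hcongr : A.filter (fun t => x t + g t = 1) =
          A.filter (fun t => x t + (if w < j + i then c t else c t + 1) = 1) := by
        apply Finset.filter_congr
        intro t ht
        rw [hg]
        simp only [if_pos (hAs ht)]
      rw [hcongr]
      exact part_weight s w i j hs c x v hx1 hdv.1 hint1
    · have hcongr : B.filter (fun t => x t + g t = 1) =
          B.filter (fun t => x t + (if n - w < j + i then c t else c t + 1) = 1) := by
        apply Finset.filter_congr
        intro t ht
        rw [hg]
        simp only [if_neg (Finset.mem_compl.1 (hBs ht))]
      rw [hcongr]
      exact part_weight sᶜ (n - w) i j hsc c x v hx2 hdv.2 hint2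
  · intro x hx y hy hxy
    obtain ⟨⟨hx1, hx2⟩, hintx1, hintx2⟩ := hxfacts x hx
    obtain ⟨⟨hy1, hy2⟩, hinty1, hinty2⟩ := hxfacts y hy
    refine ⟨?_, hcode.2 x (Finset.filter_subset _ _ hx) y
      (Finset.filter_subset _ _ hy) hxy⟩
    intro t hne
    by_contra htAB
    rw [Finset.mem_union, not_or] at htAB
    by_cases hts : t ∈ s
    · have e1 := part_fixed s w i j hs c x v hx1 hdv.1 hintx1 t hts
        (by rw [← hA]; exact htAB.1)
      have e2 := part_fixed s w i j hs c y v hy1 hdv.1 hinty1 t hts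
        (by rw [← hA]; exact htAB.1)
      exact hne (e1.trans e2.symm)
    · have hts' : t ∈ sᶜ := Finset.mem_compl.2 hts
      have e1 := part_fixed sᶜ (n - w) i j hsc c x v hx2 hdv.2 hintx2 t hts'
        (by rw [← hB]; exact htAB.2)
      have e2 := part_fixed sᶜ (n - w) i j hsc c y v hy2 hdv.2 hinty2 t hts'
        (by rw [← hB]; exact htAB.2)
      exact hne (e1.trans e2.symm)

lemma avg_le_one {α : Type*} [DecidableEq α] (C : Finset α) (hC : C.Nonempty) (F : α → ℚ)
    (h : ∀ c ∈ C, F c ≤ 1) : (∑ c ∈ C, F c) / (C.card : ℚ) ≤ 1 := by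
  have hN : (0:ℚ) < (C.card : ℚ) := by exact_mod_cast Finset.card_pos.2 hC
  rw [div_le_one hN]
  calc ∑ c ∈ C, F c ≤ ∑ _c ∈ C, (1:ℚ) := Finset.sum_le_sum h
  _ = C.card := by simp

lemma arith1 (H1 : Finset ℕ) (i j : ℕ) (hiH : i ∈ H1) (hjH : j ∈ H1) (hij : i ≠ j)
    (P : ℕ → ℤ) (hP0 : ∀ k ∈ H1, 0 < P k)
    (Pij Pji : ℤ) (hPij0 : 0 < Pij) (hPji0 : 0 < Pji)
    (a : ℕ → ℕ)
    (ha : ∀ k ∈ H1, (a k : ℤ) ≤ P k)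
    (hzero : ∀ k ∈ H1, ∀ l ∈ H1, k ≠ l → ¬((k = i ∧ l = j) ∨ (k = j ∧ l = i)) →
      a k = 0 ∨ a l = 0)
    (hai : a j ≠ 0 → (a i : ℤ) ≤ Pij) (haj : a i ≠ 0 → (a j : ℤ) ≤ Pji)
    (h1 : (1 : ℚ) ≤ (Pij : ℚ) / (P i : ℚ) + (Pji : ℚ) / (P j : ℚ)) :
    (((P j : ℚ) - (Pji : ℚ)) / ((P j : ℚ) * (Pij : ℚ))) * (a i : ℚ) +
      (1 / (P j : ℚ)) * (a j : ℚ) + ∑ k ∈ H1 \ {i, j}, (a k : ℚ) / (P k : ℚ) ≤ 1 := by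
  have hQi : (0:ℚ) < (P i : ℚ) := by exact_mod_cast hP0 i hiH
  have hQj : (0:ℚ) < (P j : ℚ) := by exact_mod_cast hP0 j hjH
  have hRij : (0:ℚ) < (Pij : ℚ) := by exact_mod_cast hPij0
  have hRji : (0:ℚ) < (Pji : ℚ) := by exact_mod_cast hPji0
  have h1' : (P i : ℚ) * (P j : ℚ) ≤ (Pij : ℚ) * (P j : ℚ) + (Pji : ℚ) * (P i : ℚ) := by
    rw [div_add_div _ _ (ne_of_gt hQi) (ne_of_gt hQj), le_div_iff₀ (mul_pos hQi hQj),
      one_mul] at h1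
    linarith [h1]
  by_cases hA : ∃ k ∈ H1 \ {i, j}, a k ≠ 0
  · obtain ⟨k, hkmem, hak⟩ := hA
    have hkH : k ∈ H1 := (Finset.mem_sdiff.1 hkmem).1
    have hkij : k ≠ i ∧ k ≠ j := by
      have := (Finset.mem_sdiff.1 hkmem).2
      simp only [Finset.mem_insert, Finset.mem_singleton, not_or] at this
      exact this
    have hallz : ∀ l ∈ H1, l ≠ k → a l = 0 := by
      intro l hl hlk
      rcases hzero k hkH l hl (Ne.symm hlk)
        (by rintro (⟨h1, h2⟩ | ⟨h1, h2⟩) <;> [exact hkij.1 h1; exact hkij.2 h1]) with h | h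
      · exact absurd h hak
      · exact h
    have hai0 : a i = 0 := hallz i hiH (fun h => hkij.1 h.symm)
    have haj0 : a j = 0 := hallz j hjH (fun h => hkij.2 h.symm)
    have hsum : ∑ l ∈ H1 \ {i, j}, (a l : ℚ) / (P l : ℚ) = (a k : ℚ) / (P k : ℚ) := by
      apply Finset.sum_eq_single_of_mem k hkmem
      intro l hl hlk
      rw [hallz l (Finset.mem_sdiff.1 hl).1 hlk]
      simp
    rw [hai0, haj0, hsum]
    have hQk : (0:ℚ) < (P k : ℚ) := by exact_mod_cast hP0 k hkH
    have hak' : (a k : ℚ) ≤ (P k : ℚ) := by exact_mod_cast ha k hkH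
    simp only [Nat.cast_zero, mul_zero, zero_add, add_zero]
    rw [div_le_one hQk]
    exact hak'
  · push_neg at hA
    have hsum : ∑ l ∈ H1 \ {i, j}, (a l : ℚ) / (P l : ℚ) = 0 := by
      apply Finset.sum_eq_zero
      intro l hl
      rw [hA l hl]
      simp
    rw [hsum, add_zero]
    have hx0 : (0:ℚ) ≤ (a i : ℚ) := by positivity
    have hy0 : (0:ℚ) ≤ (a j : ℚ) := by positivity
    have hxQi : ((a i : ℕ) : ℚ) ≤ (P i : ℚ) := by exact_mod_cast ha i hiH
    have hyQj : ((a j : ℕ) : ℚ) ≤ (P j : ℚ) := by exact_mod_cast ha j hjH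
    set x : ℚ := (a i : ℚ) with hx
    set y : ℚ := (a j : ℚ) with hy
    have key : ((P j : ℚ) - (Pji : ℚ)) * x + (Pij : ℚ) * y ≤ (P j : ℚ) * (Pij : ℚ) := by
      by_cases hxz : a i = 0
      · have : x = 0 := by rw [hx, hxz]; simp
        rw [this]
        nlinarith
      · have hyRji : y ≤ (Pji : ℚ) := by rw [hy]; exact_mod_cast haj hxz
        by_cases hyz : a j = 0
        · have : y = 0 := by rw [hy, hyz]; simp
          rw [this]
          rcases le_or_gt (P j : ℚ) (Pji : ℚ) with h | h
          · nlinarith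
          · nlinarith
        · have hxRij : x ≤ (Pij : ℚ) := by rw [hx]; exact_mod_cast hai hyz
          rcases le_or_gt (P j : ℚ) (Pji : ℚ) with h | h
          · nlinarith
          · nlinarith
    have heq : (((P j : ℚ) - (Pji : ℚ)) / ((P j : ℚ) * (Pij : ℚ))) * x + (1 / (P j : ℚ)) * y
        = (((P j : ℚ) - (Pji : ℚ)) * x + (Pij : ℚ) * y) / ((P j : ℚ) * (Pij : ℚ)) := by
      field_simp
    rw [heq, div_le_one (by positivity)]
    exact key

lemma arith3 (H1 : Finset ℕ) (i j : ℕ) (hiH : i ∈ H1) (hjH : j ∈ H1) (hij : i ≠ j)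
    (P : ℕ → ℤ) (hP0 : ∀ k ∈ H1, 0 < P k)
    (Pij Pji : ℤ) (hPij0 : 0 < Pij) (hPji0 : 0 < Pji)
    (a : ℕ → ℕ)
    (ha : ∀ k ∈ H1, (a k : ℤ) ≤ P k)
    (hzero : ∀ k ∈ H1, ∀ l ∈ H1, k ≠ l → ¬((k = i ∧ l = j) ∨ (k = j ∧ l = i)) →
      a k = 0 ∨ a l = 0)
    (hai : a j ≠ 0 → (a i : ℤ) ≤ Pij) (haj : a i ≠ 0 → (a j : ℤ) ≤ Pji)
    (h3 : (Pij : ℚ) / (P i : ℚ) + (Pji : ℚ) / (P j : ℚ) ≤ 1) :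
    ∑ k ∈ H1, (a k : ℚ) / (P k : ℚ) ≤ 1 := by
  have hQi : (0:ℚ) < (P i : ℚ) := by exact_mod_cast hP0 i hiH
  have hQj : (0:ℚ) < (P j : ℚ) := by exact_mod_cast hP0 j hjH
  have hss : {i, j} ⊆ H1 := by
    intro t ht
    rcases Finset.mem_insert.1 ht with h | h
    · exact h ▸ hiH
    · exact (Finset.mem_singleton.1 h) ▸ hjH
  have hsplit : ∑ k ∈ H1, (a k : ℚ) / (P k : ℚ) =
      ∑ k ∈ H1 \ {i, j}, (a k : ℚ) / (P k : ℚ) + ((a i : ℚ) / (P i : ℚ) + (a j : ℚ) / (P j : ℚ)) := by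
    rw [← Finset.sum_sdiff hss]
    congr 1
    exact Finset.sum_pair hij
  rw [hsplit]
  by_cases hA : ∃ k ∈ H1 \ {i, j}, a k ≠ 0
  · obtain ⟨k, hkmem, hak⟩ := hA
    have hkH : k ∈ H1 := (Finset.mem_sdiff.1 hkmem).1
    have hkij : k ≠ i ∧ k ≠ j := by
      have := (Finset.mem_sdiff.1 hkmem).2
      simp only [Finset.mem_insert, Finset.mem_singleton, not_or] at this
      exact this
    have hallz : ∀ l ∈ H1, l ≠ k → a l = 0 := by
      intro l hl hlk
      rcases hzero k hkH l hl (Ne.symm hlk)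
        (by rintro (⟨h1, h2⟩ | ⟨h1, h2⟩) <;> [exact hkij.1 h1; exact hkij.2 h1]) with h | h
      · exact absurd h hak
      · exact h
    have hai0 : a i = 0 := hallz i hiH (fun h => hkij.1 h.symm)
    have haj0 : a j = 0 := hallz j hjH (fun h => hkij.2 h.symm)
    have hsum : ∑ l ∈ H1 \ {i, j}, (a l : ℚ) / (P l : ℚ) = (a k : ℚ) / (P k : ℚ) := by
      apply Finset.sum_eq_single_of_mem k hkmem
      intro l hl hlk
      rw [hallz l (Finset.mem_sdiff.1 hl).1 hlk]
      simp
    rw [hai0, haj0, hsum]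
    have hQk : (0:ℚ) < (P k : ℚ) := by exact_mod_cast hP0 k hkH
    have hak' : (a k : ℚ) ≤ (P k : ℚ) := by exact_mod_cast ha k hkH
    simp only [Nat.cast_zero, zero_div, add_zero, zero_add]
    rw [div_le_one hQk]
    exact hak'
  · push_neg at hA
    have hsum : ∑ l ∈ H1 \ {i, j}, (a l : ℚ) / (P l : ℚ) = 0 := by
      apply Finset.sum_eq_zero
      intro l hl
      rw [hA l hl]
      simp
    rw [hsum, zero_add]
    by_cases hxz : a i = 0
    · rw [hxz]
      simp only [Nat.cast_zero, zero_div, zero_add]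
      rw [div_le_one hQj]
      exact_mod_cast ha j hjH
    · by_cases hyz : a j = 0
      · rw [hyz]
        simp only [Nat.cast_zero, zero_div, add_zero]
        rw [div_le_one hQi]
        exact_mod_cast ha i hiH
      · have hxRij : ((a i : ℕ) : ℚ) ≤ (Pij : ℚ) := by exact_mod_cast hai hyz
        have hyRji : ((a j : ℕ) : ℚ) ≤ (Pji : ℚ) := by exact_mod_cast haj hxz
        calc (a i : ℚ) / (P i : ℚ) + (a j : ℚ) / (P j : ℚ)
            ≤ (Pij : ℚ) / (P i : ℚ) + (Pji : ℚ) / (P j : ℚ) := by gcongr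
        _ ≤ 1 := h3

/-- For a nonempty `(n,d,w)` constant-weight code `C` (`d` even,
`d < 2w ≤ n`) with distance distribution `{A_{2i}}`, a subset `H1 ⊆ H` with
`|H1| ≥ 2` containing `i ≠ j` with `m_{i,j} = d` and `m_{k,l} < d` for all other
pairs, positive integers `P_k ≥ T(k,w,k,n-w,d)` for `k ∈ H1` and `P_{ij}, P_{ji}`
as described, the three conditional inequalities hold, where `H2 = H1 \ {i,j}`. -/
theorem distDistr_subset_equality_case (n d w : ℕ) (C : Finset (Fin n → ZMod 2))
    (hC : C.Nonempty) (hcode : IsCWCode n d w C) (hd : Even d) (hdw : d < 2 * w)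
    (hwn : 2 * w ≤ n)
    (H1 : Finset ℕ) (hH1 : H1 ⊆ Finset.Icc (d / 2) w) (hcard : 2 ≤ H1.card)
    (i j : ℕ) (hiH1 : i ∈ H1) (hjH1 : j ∈ H1) (hij : i ≠ j) (hm : mMax n w i j = d)
    (hother : ∀ k ∈ H1, ∀ l ∈ H1, k ≠ l → ¬((k = i ∧ l = j) ∨ (k = j ∧ l = i)) →
      mMax n w k l < d)
    (P : ℕ → ℤ) (hP0 : ∀ k ∈ H1, 0 < P k)
    (hP : ∀ k ∈ H1, (T k w k (n - w) d : ℤ) ≤ P k)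
    (Pij Pji : ℤ) (hPij0 : 0 < Pij) (hPji0 : 0 < Pji)
    (hPji : (T (((i : ℤ) + j - (w : ℤ)).natAbs)
        (if w < i + j then i else w - i)
        (((i : ℤ) + j - ((n - w : ℕ) : ℤ)).natAbs)
        (if n - w < i + j then i else (n - w) - i) d : ℤ) ≤ Pji)
    (hPij : (T (((j : ℤ) + i - (w : ℤ)).natAbs)
        (if w < j + i then j else w - j)
        (((j : ℤ) + i - ((n - w : ℕ) : ℤ)).natAbs)
        (if n - w < j + i then j else (n - w) - j) d : ℤ) ≤ Pij) :
    ((1 : ℚ) ≤ (Pij : ℚ) / (P i : ℚ) + (Pji : ℚ) / (P j : ℚ) →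
      (((P j : ℚ) - (Pji : ℚ)) / ((P j : ℚ) * (Pij : ℚ))) * distDistr C (2 * i) +
        (1 / (P j : ℚ)) * distDistr C (2 * j) +
        ∑ k ∈ H1 \ {i, j}, distDistr C (2 * k) / (P k : ℚ) ≤ 1) ∧
    ((1 : ℚ) ≤ (Pij : ℚ) / (P i : ℚ) + (Pji : ℚ) / (P j : ℚ) →
      (1 / (P i : ℚ)) * distDistr C (2 * i) +
        (((P i : ℚ) - (Pij : ℚ)) / ((P i : ℚ) * (Pji : ℚ))) * distDistr C (2 * j) +
        ∑ k ∈ H1 \ {i, j}, distDistr C (2 * k) / (P k : ℚ) ≤ 1) ∧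
    ((Pij : ℚ) / (P i : ℚ) + (Pji : ℚ) / (P j : ℚ) ≤ 1 →
      ∑ k ∈ H1, distDistr C (2 * k) / (P k : ℚ) ≤ 1) := by
  classical
  have hiw : i ≤ w := (Finset.mem_Icc.1 (hH1 hiH1)).2
  have hjw : j ≤ w := (Finset.mem_Icc.1 (hH1 hjH1)).2
  have hmji : mMax n w j i = d := by
    have h1 := mMax_eq hwn hiw hjw
    have h2 := mMax_eq hwn hjw hiw
    omega
  have key : ∀ c ∈ C,
      (∀ k ∈ H1, ((Sdist C c (2 * k)).card : ℤ) ≤ P k) ∧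
      (∀ k ∈ H1, ∀ l ∈ H1, k ≠ l → ¬((k = i ∧ l = j) ∨ (k = j ∧ l = i)) →
        (Sdist C c (2 * k)).card = 0 ∨ (Sdist C c (2 * l)).card = 0) ∧
      ((Sdist C c (2 * j)).card ≠ 0 → ((Sdist C c (2 * i)).card : ℤ) ≤ Pij) ∧
      ((Sdist C c (2 * i)).card ≠ 0 → ((Sdist C c (2 * j)).card : ℤ) ≤ Pji) := by
    intro c hc
    refine ⟨?_, ?_, ?_, ?_⟩
    · intro k hk
      have hb := base_bound (k := k) C hcode (by omega) c hc
      calc ((Sdist C c (2 * k)).card : ℤ) ≤ (T k w k (n - w) d : ℤ) := by exact_mod_cast hb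
      _ ≤ P k := hP k hk
    · intro k hk l hl hkl hpair
      by_contra hcon
      push_neg at hcon
      obtain ⟨h1, h2⟩ := hcon
      obtain ⟨u, hu⟩ := Finset.card_pos.1 (Nat.pos_of_ne_zero h1)
      obtain ⟨v2, hv2⟩ := Finset.card_pos.1 (Nat.pos_of_ne_zero h2)
      exact no_two C hcode hwn (Finset.mem_Icc.1 (hH1 hk)).2 (Finset.mem_Icc.1 (hH1 hl)).2
        hkl (hother k hk l hl hkl hpair) c hc u v2 hu hv2
    · intro hne
      obtain ⟨v2, hv2⟩ := Finset.card_pos.1 (Nat.pos_of_ne_zero hne)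
      have hb := cross_bound C hcode hwn hiw hjw hij hm c hc v2 hv2
      calc ((Sdist C c (2 * i)).card : ℤ)
          ≤ (T (((j : ℤ) + i - (w : ℤ)).natAbs) (if w < j + i then j else w - j)
            (((j : ℤ) + i - ((n - w : ℕ) : ℤ)).natAbs)
            (if n - w < j + i then j else (n - w) - j) d : ℤ) := by exact_mod_cast hb
      _ ≤ Pij := hPij
    · intro hne
      obtain ⟨u, hu⟩ := Finset.card_pos.1 (Nat.pos_of_ne_zero hne)
      have hb := cross_bound C hcode hwn hjw hiw hij.symm hmji c hc u hu
      calc ((Sdist C c (2 * j)).card : ℤ)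
          ≤ (T (((i : ℤ) + j - (w : ℤ)).natAbs) (if w < i + j then i else w - i)
            (((i : ℤ) + j - ((n - w : ℕ) : ℤ)).natAbs)
            (if n - w < i + j then i else (n - w) - i) d : ℤ) := by exact_mod_cast hb
      _ ≤ Pji := hPji
  have hcoef : ∀ (q : ℚ) (m : ℕ), q * distDistr C m
      = (∑ c ∈ C, q * ((Sdist C c m).card : ℚ)) / (C.card : ℚ) := by
    intro q m
    rw [distDistr, ← mul_div_assoc, Finset.mul_sum]
  have hsumrw : ∀ H2 : Finset ℕ, ∑ k ∈ H2, distDistr C (2 * k) / (P k : ℚ)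
      = (∑ c ∈ C, ∑ k ∈ H2, ((Sdist C c (2 * k)).card : ℚ) / (P k : ℚ)) / (C.card : ℚ) := by
    intro H2
    calc ∑ k ∈ H2, distDistr C (2 * k) / (P k : ℚ)
        = ∑ k ∈ H2, (∑ c ∈ C, ((Sdist C c (2 * k)).card : ℚ) / (P k : ℚ)) / (C.card : ℚ) := by
          apply Finset.sum_congr rfl
          intro k _
          rw [distDistr, div_right_comm, Finset.sum_div]
      _ = (∑ k ∈ H2, ∑ c ∈ C, ((Sdist C c (2 * k)).card : ℚ) / (P k : ℚ)) / (C.card : ℚ) := by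
          rw [Finset.sum_div]
      _ = (∑ c ∈ C, ∑ k ∈ H2, ((Sdist C c (2 * k)).card : ℚ) / (P k : ℚ)) / (C.card : ℚ) := by
          rw [Finset.sum_comm]
  refine ⟨?_, ?_, ?_⟩
  · intro h1
    rw [hcoef, hcoef, hsumrw, ← add_div, ← add_div, ← Finset.sum_add_distrib,
      ← Finset.sum_add_distrib]
    apply avg_le_one C hC
    intro c hc
    obtain ⟨k1, k2, k3, k4⟩ := key c hc
    exact arith1 H1 i j hiH1 hjH1 hij P hP0 Pij Pji hPij0 hPji0
      (fun k => (Sdist C c (2 * k)).card) k1 k2 k3 k4 h1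
  · intro h1
    have h1' : (1 : ℚ) ≤ (Pji : ℚ) / (P j : ℚ) + (Pij : ℚ) / (P i : ℚ) := by linarith
    have harith := fun c (hc : c ∈ C) => arith1 H1 j i hjH1 hiH1 hij.symm P hP0 Pji Pij
      hPji0 hPij0 (fun k => (Sdist C c (2 * k)).card) (key c hc).1
      (fun k hk l hl hkl hp => (key c hc).2.1 k hk l hl hkl (by tauto))
      (key c hc).2.2.2 (key c hc).2.2.1 h1'
    rw [show ({i, j} : Finset ℕ) = {j, i} from Finset.pair_comm i j]
    rw [hcoef, hcoef, hsumrw, ← add_div, ← add_div, ← Finset.sum_add_distrib,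
      ← Finset.sum_add_distrib]
    apply avg_le_one C hC
    intro c hc
    have := harith c hc
    linarith [this]
  · intro h3
    rw [hsumrw]
    apply avg_le_one C hC
    intro c hc
    obtain ⟨k1, k2, k3, k4⟩ := key c hc
    exact arith3 H1 i j hiH1 hjH1 hij P hP0 Pij Pji hPij0 hPji0
      (fun k => (Sdist C c (2 * k)).card) k1 k2 k3 k4 h3
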